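/- Let F be a field and k : Φ0 → Fˣ a W0-invariant function. Let J ⊊ {0,…,r} and define η_J : Φ0+ → {−1, 0, 1} by η_J(α) = −1 if α vanishes identically on C^J, η_J(α) = 1 if α is identically equal to 1 on C^J, and η_J(α) = 0 if α(C^J) ⊆ (0,1). Then: for every i ∈ J ∩ {1,…,r}, ∏_{α ∈ Φ0+} k(α)^{η_J(α)·α(α_i∨)} = k(α_i)^{−2}; and if 0 ∈ J, then ∏_{α ∈ Φ0+} k(α)^{η_J(α)·α(φ∨)} = k(φ)². (Equivalently, for any subgroup Λ ⊆ E with Q∨ ⊆ Λ and α(Λ) ⊆ ℤ for all α ∈ Φ0, the character 𝔰_J ∈ Hom(Λ, Fˣ), λ ↦ ∏_{α∈Φ0+} k(α)^{η_J(α)·α(λ)}, satisfies 𝔰_J^{Dα_j∨} = k_{Dα_j}^{−2} for all j ∈ J, where Dα_i = α_i and Dα_0 = −φ.) -/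

import Mathlib

open scoped InnerProductSpace Classical

noncomputable section

namespace SSV

variable {E : Type*} [NormedAddCommGroup E] [InnerProductSpace ℝ E]

/-- The coroot `α∨ = (2/‖α‖²)·α` of `α ∈ E`, under the identification of `E*` with `E`
via the inner product (a root `α` acts on `E` as the linear functional `y ↦ ⟪α,y⟫`). -/
def cv (α : E) : E := (2 / ⟪α, α⟫_ℝ) • α

/-- The linear functional `y ↦ ⟪α∨, y⟫ = 2⟪α,y⟫/‖α‖²`. -/
def rootForm (α : E) : E →ₗ[ℝ] ℝ where
  toFun y := 2 / ⟪α, α⟫_ℝ * ⟪α, y⟫_ℝ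
  map_add' y z := by rw [inner_add_right]; ring
  map_smul' c y := by
    simp only [RingHom.id_apply, smul_eq_mul, real_inner_smul_right]
    ring

/-- The orthogonal reflection `s_α : y ↦ y − α(y)·α∨` in the hyperplane `α = 0`. -/
def lrefl (α : E) : E ≃ₗ[ℝ] E :=
  if h : ⟪α, α⟫_ℝ = 0 then LinearEquiv.refl ℝ E
  else
    Module.reflection (f := rootForm α) (x := α)
      (by simp only [rootForm, LinearMap.coe_mk, AddHom.coe_mk]; field_simp)

/-- The affine reflection `s_a : y ↦ y − a(y)·α∨` associated to the affine root
`a = (α, c)`, i.e. to the affine function `y ↦ α(y) + c = ⟪α,y⟫ + c` on `E`. -/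
def aRefl (α : E) (c : ℝ) : E ≃ᵃ[ℝ] E :=
  (lrefl α).toAffineEquiv.trans (AffineEquiv.constVAdd ℝ E (-(c • cv α)))

/-- The translation `τ(μ) : y ↦ y + μ`. -/
def tr (μ : E) : E ≃ᵃ[ℝ] E := AffineEquiv.constVAdd ℝ E μ

/-- `η = χ_{ℤ_{>0}} − χ_{ℤ_{≤0}} : ℝ → {−1,0,1}`. -/
def eta (x : ℝ) : ℤ :=
  if ∃ n : ℤ, x = (n : ℝ) then (if 0 < x then 1 else -1) else 0

/-- `sgn(ℓ) = ℓ/|ℓ|` for `ℓ ≠ 0`, and `sgn(0) = 1`. -/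
def sgnz (l : ℤ) : ℤ := if 0 ≤ l then 1 else -1

/-- The alternating word `j j' j j' ⋯` of length `m`. -/
def altList {n : ℕ} (j j' : Fin n) (m : ℕ) : List (Fin n) :=
  (List.range m).map fun s => if s % 2 = 0 then j else j'

/-- Evaluation of the affine function `a = (α, c)` at `y`: `a(y) = α(y) + c`. -/
def aval (a : E × ℝ) (y : E) : ℝ := ⟪a.1, y⟫_ℝ + a.2

/-- The contragredient action of `w` on affine roots: `(w·a)(y) = a(w⁻¹·y)`. -/
def wact (w : E ≃ᵃ[ℝ] E) (a : E × ℝ) : E × ℝ :=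
  (w.linear a.1, a.2 - ⟪w.linear a.1, w 0⟫_ℝ)

/-- The relation `y ≺_α z`. -/
def precA (α : E) (y z : E) : Prop :=
  (∃ l : ℤ, y = aRefl α (l : ℝ) z) ∧
    (|⟪α, y⟫_ℝ| < |⟪α, z⟫_ℝ| ∨ (⟪α, y⟫_ℝ = -⟪α, z⟫_ℝ ∧ 0 < ⟪α, y⟫_ℝ))

/-- The data of a reduced irreducible finite root system `Φ0` realised in `E* ≅ E`,
normalised so that long roots have squared length `2/m²`, together with a choice of
positive roots, simple roots `α_1, …, α_r`, and the corresponding highest root `φ`. -/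
structure Data (E : Type*) [NormedAddCommGroup E] [InnerProductSpace ℝ E] where
  r : ℕ
  r_pos : 0 < r
  m : ℕ
  m_pos : 0 < m
  Φ0 : Finset E
  pos : Finset E
  simple : Fin r → E
  hroot : E
  root_ne_zero : ∀ α ∈ Φ0, α ≠ 0
  root_neg_mem : ∀ α ∈ Φ0, -α ∈ Φ0
  root_reduced : ∀ α ∈ Φ0, ∀ c : ℝ, c • α ∈ Φ0 → c = 1 ∨ c = -1
  root_refl_mem : ∀ α ∈ Φ0, ∀ β ∈ Φ0, aRefl α 0 β ∈ Φ0
  root_crystal : ∀ α ∈ Φ0, ∀ β ∈ Φ0, ∃ n : ℤ, ⟪cv β, α⟫_ℝ = (n : ℝ)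
  root_irred : ∀ A B : Set E, (Φ0 : Set E) = A ∪ B → A.Nonempty → B.Nonempty →
    (∀ a ∈ A, ∀ b ∈ B, ⟪a, b⟫_ℝ = 0) → False
  root_norm_le : ∀ α ∈ Φ0, ⟪α, α⟫_ℝ ≤ 2 / (m : ℝ) ^ 2
  root_norm_int : ∀ α ∈ Φ0, ∃ n : ℤ, (n : ℝ) * ⟪α, α⟫_ℝ = 2
  pos_subset : pos ⊆ Φ0
  pos_dichotomy : ∀ α ∈ Φ0, (α ∈ pos ∧ -α ∉ pos) ∨ (α ∉ pos ∧ -α ∈ pos)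
  simple_mem_pos : ∀ i, simple i ∈ pos
  simple_indep : LinearIndependent ℝ simple
  pos_nat_comb : ∀ α ∈ pos, ∃ n : Fin r → ℕ, α = ∑ i, (n i : ℝ) • simple i
  hroot_mem_pos : hroot ∈ pos
  hroot_long : ⟪hroot, hroot⟫_ℝ = 2 / (m : ℝ) ^ 2
  hroot_highest : ∀ α ∈ Φ0, ∃ n : Fin r → ℕ, hroot - α = ∑ i, (n i : ℝ) • simple i

namespace Data

variable (D : Data E)

/-- The coroot lattice `Q∨`. -/
def Qv : AddSubgroup E := AddSubgroup.closure (cv '' (D.Φ0 : Set E))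

/-- The simple affine roots `α_0 = (−φ, 1)` and `α_i = (α_i, 0)` (`1 ≤ i ≤ r`), as pairs
`(gradient, constant term)`. -/
def asimple : Fin (D.r + 1) → E × ℝ :=
  Fin.cases (-D.hroot, (1 : ℝ)) fun i => (D.simple i, (0 : ℝ))

/-- The simple reflections `s_0, …, s_r` of the affine Weyl group. -/
def sgen (j : Fin (D.r + 1)) : E ≃ᵃ[ℝ] E := aRefl (D.asimple j).1 (D.asimple j).2

/-- `a = (α, c)` is an affine root iff `α ∈ Φ0` and `c ∈ ℤ`. -/
def IsAffRoot (a : E × ℝ) : Prop := a.1 ∈ D.Φ0 ∧ ∃ n : ℤ, a.2 = (n : ℝ)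

/-- `a` is a positive affine root. -/
def IsPosAff (a : E × ℝ) : Prop :=
  D.IsAffRoot a ∧ (0 < a.2 ∨ (a.2 = 0 ∧ a.1 ∈ D.pos))

/-- The set of reflections `s_α`, `α ∈ Φ0`. -/
def reflSet : Set (E ≃ᵃ[ℝ] E) := {g | ∃ α ∈ D.Φ0, g = aRefl α 0}

/-- The set of translations `τ(μ)`, `μ ∈ Q∨`. -/
def trSet : Set (E ≃ᵃ[ℝ] E) := {g | ∃ μ ∈ D.Qv, g = tr μ}

/-- The finite Weyl group `W0`, generated by the reflections `s_α`. -/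
def W0 : Subgroup (E ≃ᵃ[ℝ] E) := Subgroup.closure D.reflSet

/-- The affine Weyl group `W = W0 ⋉ Q∨`. -/
def W : Subgroup (E ≃ᵃ[ℝ] E) := Subgroup.closure (D.reflSet ∪ D.trSet)

/-- The inversion set `Π(w) = Φ+ ∩ w⁻¹Φ−`. -/
def PiSet (w : E ≃ᵃ[ℝ] E) : Set (E × ℝ) :=
  {a | D.IsPosAff a ∧ ¬D.IsPosAff (wact w a)}

/-- The length function `ℓ(w) := #Π(w)`. -/
def len (w : E ≃ᵃ[ℝ] E) : ℕ := (D.PiSet w).ncard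

/-- The open fundamental alcove `C₊`. -/
def Cp : Set E := {y | ∀ α ∈ D.pos, 0 < ⟪α, y⟫_ℝ ∧ ⟪α, y⟫_ℝ < 1}

/-- The closed fundamental alcove `C̄₊`. -/
def Cbar : Set E := closure D.Cp

/-- The face `C^J` of `C̄₊` (for `J ⊊ {0,…,r}`). -/
def CJ (J : Set (Fin (D.r + 1))) : Set E :=
  {c | c ∈ D.Cbar ∧ ∀ j, aval (D.asimple j) c = 0 ↔ j ∈ J}

/-- The orbit `O_c = W·c`. -/
def Orb (c : E) : Set E := {y | ∃ w ∈ D.W, w c = y}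

/-- The unique point `c_y ∈ C̄₊` in the `W`-orbit of `y`. -/
def cpt (y : E) : E :=
  if h : ∃ c, c ∈ D.Cbar ∧ ∃ w ∈ D.W, w c = y then h.choose else 0

/-- The unique shortest element `w_y ∈ W` with `w_y · c_y = y`. -/
def wmin (y : E) : E ≃ᵃ[ℝ] E :=
  if h : ∃ w, (w ∈ D.W ∧ w (D.cpt y) = y) ∧
      ∀ u, u ∈ D.W → u (D.cpt y) = y → D.len w ≤ D.len u then
    h.choose
  else 1

/-- Reflections of the Coxeter system `(W, {s_0, …, s_r})`. -/
def IsCoxRefl (g : E ≃ᵃ[ℝ] E) : Prop := ∃ w ∈ D.W, ∃ j, g = w * D.sgen j * w⁻¹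

/-- A single step in the Bruhat order. -/
def bstep (u v : E ≃ᵃ[ℝ] E) : Prop :=
  (∃ g, D.IsCoxRefl g ∧ v = g * u) ∧ D.len u < D.len v

/-- The Bruhat order `≤_B` of `(W, {s_0, …, s_r})`. -/
def bruhatLE : (E ≃ᵃ[ℝ] E) → (E ≃ᵃ[ℝ] E) → Prop := Relation.ReflTransGen D.bstep

/-- The strict Bruhat order `<_B`. -/
def bruhatLT (u v : E ≃ᵃ[ℝ] E) : Prop := D.bruhatLE u v ∧ u ≠ v

/-- The parabolic Bruhat order `≤` on `E`: `y ≤ z` iff `y ∈ W·z` and `w_y ≤_B w_z`. -/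
def paraLE (y z : E) : Prop :=
  (∃ w ∈ D.W, w z = y) ∧ D.bruhatLE (D.wmin y) (D.wmin z)

/-- The strict parabolic Bruhat order `<` on `E`. -/
def paraLT (y z : E) : Prop := D.paraLE y z ∧ y ≠ z

/-- The relation `≺`, the transitive closure of the `≺_α` (`α ∈ Φ0+`). -/
def prec : E → E → Prop :=
  Relation.TransGen fun y z => ∃ α ∈ D.pos, precA α y z

/-- The relation `⪯`. -/
def precLE (y z : E) : Prop := D.prec y z ∨ y = z

/-- The parabolic subgroup `W_J` of `W`. -/
def WJ (J : Set (Fin (D.r + 1))) : Subgroup (E ≃ᵃ[ℝ] E) :=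
  Subgroup.closure {g | ∃ j ∈ J, g = D.sgen j}

/-- The set `W^J` of minimal-length representatives of the cosets `W/W_J`. -/
def WminJ (J : Set (Fin (D.r + 1))) : Set (E ≃ᵃ[ℝ] E) :=
  {w | w ∈ D.W ∧ ∀ u ∈ D.WJ J, D.len w ≤ D.len (w * u)}

/-- Dominant elements: `α(μ) ≥ 0` for all `α ∈ Φ0+`. -/
def IsDom (μ : E) : Prop := ∀ α ∈ D.pos, 0 ≤ ⟪α, μ⟫_ℝ

/-- `Π0(v) = Φ0+ ∩ v⁻¹Φ0−` for `v ∈ W0`. -/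
def Pi0 (v : E ≃ᵃ[ℝ] E) : Finset E := D.pos.filter fun α => -(v.linear α) ∈ D.pos

/-- `χ = χ₊ − χ₋ : Φ0 → {±1}`. -/
def chi (α : E) : ℤ := if α ∈ D.pos then 1 else -1

end Data

/-- The character `𝔰_y : μ ↦ ∏_{α ∈ Φ0+} k_α^{η(α(y))·α(μ)}` (evaluated at points `μ` where
all `α(μ)` are integers, e.g. on a lattice `Λ ∈ 𝓛`). -/
def sweight {F : Type*} [Field F] (D : Data E) (k : E → Fˣ) (y μ : E) : Fˣ :=
  ∏ α ∈ D.pos, k α ^ (eta ⟪α, y⟫_ℝ * ⌊⟪α, μ⟫_ℝ⌋)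

/-- The action of `w ∈ W` on characters of `Q∨`: for `w = τ(ν)v`,
`(w·t)(μ) = q^{⟪ν,μ⟫}·t(v⁻¹μ)`. -/
def charAct {F : Type*} [Field F] (q : Fˣ) (w : E ≃ᵃ[ℝ] E) (t : E → Fˣ) : E → Fˣ :=
  fun μ => q ^ ⌊⟪w 0, μ⟫_ℝ⌋ * t (w.linear.symm μ)

/-- `t` defines a multiplicative character of `Q∨`, i.e. an element of `T = Hom(Q∨, Fˣ)`. -/
def IsChar {F : Type*} [Field F] (D : Data E) (t : E → Fˣ) : Prop :=
  ∀ μ ∈ D.Qv, ∀ ν ∈ D.Qv, t (μ + ν) = t μ * t ν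

/-- `q_α := q^{2/‖α‖²}`. -/
def qroot {F : Type*} [Field F] (q : Fˣ) (α : E) : Fˣ := q ^ ⌊2 / ⟪α, α⟫_ℝ⌋

/-- Membership in `T_J`: `t ∈ T` with `t^{α_i∨} = 1` for `i ∈ J ∩ {1,…,r}`, and
`q_φ·t^{−φ∨} = 1` if `0 ∈ J`. -/
def InTJ {F : Type*} [Field F] (D : Data E) (q : Fˣ) (J : Set (Fin (D.r + 1)))
    (t : E → Fˣ) : Prop :=
  IsChar D t ∧ (∀ i : Fin D.r, i.succ ∈ J → t (cv (D.simple i)) = 1) ∧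
    ((0 : Fin (D.r + 1)) ∈ J → qroot q D.hroot * t (-cv D.hroot) = 1)

/-- `κ_v(y) = ∏_{α ∈ Π0(v)} k_α^{−η(α(y))}`. -/
def kappa {F : Type*} [Field F] (D : Data E) (k : E → Fˣ) (v : E ≃ᵃ[ℝ] E) (y : E) : Fˣ :=
  ∏ α ∈ D.Pi0 v, k α ^ (-eta ⟪α, y⟫_ℝ)

/-- The (quasi-)monomial `x^y`, as an element of `⊕_{z ∈ E} F x^z`. -/
def xmono (F : Type*) [Field F] (y : E) : E →₀ F := Finsupp.single y 1

/-- The multiplication operator `π(x^μ) : x^y ↦ x^{y+μ}`. -/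
def xop (F : Type*) [Field F] (μ : E) : Module.End F (E →₀ F) :=
  Finsupp.lmapDomain F F (· + μ)

/-- The truncated divided difference `∇_i(x^y)` in its explicit form: with `n = ⌊α(y)⌋`,
`−(x^{y−α∨} + ⋯ + x^{y−nα∨})` if `n ≥ 1`, `0` if `n = 0`, and
`x^y + x^{y+α∨} + ⋯ + x^{y+(−n−1)α∨}` if `n ≤ −1`. -/
def nablaS (F : Type*) [Field F] (α y : E) : E →₀ F :=
  if 1 ≤ ⌊⟪α, y⟫_ℝ⌋ then
    -∑ s ∈ Finset.Icc (1 : ℤ) ⌊⟪α, y⟫_ℝ⌋, Finsupp.single (y - (s : ℝ) • cv α) (1 : F)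
  else
    ∑ s ∈ Finset.Icc (0 : ℤ) (-⌊⟪α, y⟫_ℝ⌋ - 1), Finsupp.single (y + (s : ℝ) • cv α) (1 : F)

/-- The truncated divided difference `∇_0(x^y)` in its explicit form: with `n = ⌊−φ(y)⌋`,
`−(q_φ^{−1}x^{y+φ∨} + ⋯ + q_φ^{−n}x^{y+nφ∨})` if `n ≥ 1`, `0` if `n = 0`, and
`x^y + q_φ x^{y−φ∨} + ⋯ + q_φ^{−n−1}x^{y+(n+1)φ∨}` if `n ≤ −1`. -/
def nabla0 {F : Type*} [Field F] (D : Data E) (q : Fˣ) (y : E) : E →₀ F :=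
  if 1 ≤ ⌊-⟪D.hroot, y⟫_ℝ⌋ then
    -∑ s ∈ Finset.Icc (1 : ℤ) ⌊-⟪D.hroot, y⟫_ℝ⌋,
      (((qroot q D.hroot : Fˣ) : F) ^ (-s)) • Finsupp.single (y + (s : ℝ) • cv D.hroot) (1 : F)
  else
    ∑ s ∈ Finset.Icc (0 : ℤ) (-⌊-⟪D.hroot, y⟫_ℝ⌋ - 1),
      (((qroot q D.hroot : Fˣ) : F) ^ s) • Finsupp.single (y - (s : ℝ) • cv D.hroot) (1 : F)

/-- `k_j := k_{α_j}` (`0 ≤ j ≤ r`), with `k_0 = k_φ`. -/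
def kgen {F : Type*} [Field F] (D : Data E) (k : E → Fˣ) : Fin (D.r + 1) → Fˣ :=
  Fin.cases (k D.hroot) fun i => k (D.simple i)

/-- The image of the monomial `x^y` under the truncated Demazure–Lusztig operator `π(T_j)`:
`π(T_i)x^y = k_i^{χ_ℤ(α_i(y))}x^{s_i y} + (k_i − k_i^{−1})∇_i(x^y)` for `1 ≤ i ≤ r`, and
`π(T_0)x^y = k_0^{χ_ℤ(α_0(y))}𝔱_y^{φ∨}x^{s_φ y} + (k_0 − k_0^{−1})∇_0(x^y)`. -/
def Tfun {F : Type*} [Field F] (D : Data E) (q : Fˣ) (k t : E → Fˣ) :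
    Fin (D.r + 1) → E → E →₀ F :=
  Fin.cases
    (fun y =>
      ((if ∃ n : ℤ, aval (D.asimple 0) y = (n : ℝ) then ((k D.hroot : Fˣ) : F) else 1) *
          ((charAct q (D.wmin y) t (cv D.hroot) : Fˣ) : F)) •
          Finsupp.single (aRefl D.hroot 0 y) (1 : F) +
        (((k D.hroot : Fˣ) : F) - (((k D.hroot)⁻¹ : Fˣ) : F)) • nabla0 D q y)
    fun i y =>
      (if ∃ n : ℤ, ⟪D.simple i, y⟫_ℝ = (n : ℝ) then ((k (D.simple i) : Fˣ) : F) else 1) •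
          Finsupp.single (aRefl (D.simple i) 0 y) (1 : F) +
        (((k (D.simple i) : Fˣ) : F) - (((k (D.simple i))⁻¹ : Fˣ) : F)) • nablaS F (D.simple i) y

/-- The truncated Demazure–Lusztig operator `π(T_j)` on `⊕_{y ∈ E} F x^y`. -/
def Top {F : Type*} [Field F] (D : Data E) (q : Fˣ) (k t : E → Fˣ) (j : Fin (D.r + 1)) :
    Module.End F (E →₀ F) :=
  Finsupp.linearCombination F (Tfun D q k t j)

/-- `π(((1 − x^{−α(μ)α∨})/(1 − x^{α∨}))·x^μ)` applied to `x^y`: the finite geometric sum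
appearing in the cross relation for `T_i`. -/
def crossS (F : Type*) [Field F] (α μ y : E) : E →₀ F :=
  if 1 ≤ ⌊⟪α, μ⟫_ℝ⌋ then
    -∑ s ∈ Finset.Icc (1 : ℤ) ⌊⟪α, μ⟫_ℝ⌋, Finsupp.single (y + μ - (s : ℝ) • cv α) (1 : F)
  else
    ∑ s ∈ Finset.Icc (0 : ℤ) (-⌊⟪α, μ⟫_ℝ⌋ - 1), Finsupp.single (y + μ + (s : ℝ) • cv α) (1 : F)

/-- `π(((1 − (q_φ x^{−φ∨})^{φ(μ)})/(1 − q_φ x^{−φ∨}))·x^μ)` applied to `x^y`: the finite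
geometric sum appearing in the cross relation for `T_0`. -/
def cross0 {F : Type*} [Field F] (D : Data E) (q : Fˣ) (μ y : E) : E →₀ F :=
  if 0 ≤ ⌊⟪D.hroot, μ⟫_ℝ⌋ then
    ∑ s ∈ Finset.Icc (0 : ℤ) (⌊⟪D.hroot, μ⟫_ℝ⌋ - 1),
      (((qroot q D.hroot : Fˣ) : F) ^ s) • Finsupp.single (y + μ - (s : ℝ) • cv D.hroot) (1 : F)
  else
    -∑ s ∈ Finset.Icc (1 : ℤ) (-⌊⟪D.hroot, μ⟫_ℝ⌋),
      (((qroot q D.hroot : Fˣ) : F) ^ (-s)) • Finsupp.single (y + μ + (s : ℝ) • cv D.hroot) (1 : F)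

/-- The quasi-monomial `x^y` in the model `Q^{(c)} ⊆ (E → Q)` of `Q ⊗_P P^{(c)}`:
`x^y` is the function `z ↦ x^{y−z}` supported on `y + Q∨`. -/
def xiQ {Q : Type*} [Field Q] (D : Data E) (mono : E → Q) (y : E) : E → Q :=
  fun z => if z - y ∈ D.Qv then mono (y - z) else 0

/-- Membership in the model `Q^{(c)} ⊆ (E → Q)` of `Q ⊗_P P^{(c)}`: functions supported on
`O_c` satisfying the covariance `ξ(z + ν) = x^{−ν}·ξ(z)` (`ν ∈ Q∨`). -/
def IsQc {Q : Type*} [Field Q] (D : Data E) (mono : E → Q) (c : E) (ξ : E → Q) : Prop :=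
  (∀ z, z ∉ D.Orb c → ξ z = 0) ∧
    ∀ z ∈ D.Orb c, ∀ ν ∈ D.Qv, ξ (z + ν) = (mono ν)⁻¹ * ξ z

/-- `x^{α_0∨} = q_φ x^{−φ∨}` as an element of `Q`. -/
def xroot0 {F Q : Type*} [Field F] [Field Q] (D : Data E) (ι : F →+* Q) (q : Fˣ)
    (mono : E → Q) : Q :=
  ι ((qroot q D.hroot : Fˣ) : F) * mono (-cv D.hroot)

/-- The right-hand side of the defining formula for `σ(s_j)(x^y)`:
`(k_j^{χ_ℤ(α_j(y))}(x^{α_j∨} − 1)/(k_j x^{α_j∨} − k_j^{−1}))·s_{j,𝔱}x^y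
 + ((k_j − k_j^{−1})/(k_j x^{α_j∨} − k_j^{−1}))·x^{y − ⌊Dα_j(y)⌋α_j∨}`. -/
def sigmaFormula {F Q : Type*} [Field F] [Field Q] (D : Data E) (ι : F →+* Q) (q : Fˣ)
    (k t : E → Fˣ) (mono : E → Q) : Fin (D.r + 1) → E → E → Q :=
  Fin.cases
    (fun y =>
      (((if ∃ n : ℤ, aval (D.asimple 0) y = (n : ℝ) then ι ((k D.hroot : Fˣ) : F) else 1) *
            (xroot0 D ι q mono - 1)) /
          (ι ((k D.hroot : Fˣ) : F) * xroot0 D ι q mono - ι (((k D.hroot)⁻¹ : Fˣ) : F))) •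
          (ι ((charAct q (D.wmin y) t (cv D.hroot) : Fˣ) : F) •
            xiQ D mono (aRefl D.hroot 0 y)) +
        ((ι ((k D.hroot : Fˣ) : F) - ι (((k D.hroot)⁻¹ : Fˣ) : F)) /
          (ι ((k D.hroot : Fˣ) : F) * xroot0 D ι q mono - ι (((k D.hroot)⁻¹ : Fˣ) : F))) •
          (ι (((qroot q D.hroot ^ (-⌊-⟪D.hroot, y⟫_ℝ⌋) : Fˣ) : F)) •
            xiQ D mono (y + (⌊-⟪D.hroot, y⟫_ℝ⌋ : ℝ) • cv D.hroot)))
    fun i y =>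
      (((if ∃ n : ℤ, ⟪D.simple i, y⟫_ℝ = (n : ℝ) then ι ((k (D.simple i) : Fˣ) : F) else 1) *
            (mono (cv (D.simple i)) - 1)) /
          (ι ((k (D.simple i) : Fˣ) : F) * mono (cv (D.simple i)) -
            ι (((k (D.simple i))⁻¹ : Fˣ) : F))) •
          xiQ D mono (aRefl (D.simple i) 0 y) +
        ((ι ((k (D.simple i) : Fˣ) : F) - ι (((k (D.simple i))⁻¹ : Fˣ) : F)) /
          (ι ((k (D.simple i) : Fˣ) : F) * mono (cv (D.simple i)) -
            ι (((k (D.simple i))⁻¹ : Fˣ) : F))) •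
          xiQ D mono (y - (⌊⟪D.simple i, y⟫_ℝ⌋ : ℝ) • cv (D.simple i))

end SSV
namespace SSV
variable {E : Type*} [NormedAddCommGroup E] [InnerProductSpace ℝ E]

lemma lrefl_apply' {α : E} (h : ⟪α, α⟫_ℝ ≠ 0) (y : E) :
    lrefl α y = y - (2 / ⟪α, α⟫_ℝ * ⟪α, y⟫_ℝ) • α := by
  rw [lrefl, dif_neg h, Module.reflection_apply]; rfl

lemma lrefl_invol {α : E} (h : ⟪α, α⟫_ℝ ≠ 0) (y : E) :
    lrefl α (lrefl α y) = y := by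
  simp only [lrefl, dif_neg h]
  exact Module.involutive_reflection _ y

lemma aRefl_zero_apply (α y : E) : aRefl α 0 y = lrefl α y := by
  simp [aRefl]

lemma aRefl_linear_apply (α : E) (c : ℝ) (y : E) : (aRefl α c).linear y = lrefl α y := rfl

example (α : E) (h : IsClosed {y : E | ⟪α, y⟫_ℝ ∈ Set.Icc (0:ℝ) 1}) : True := trivial

example (α : E) : IsClosed {y : E | ⟪α, y⟫_ℝ ∈ Set.Icc (0:ℝ) 1} :=
  IsClosed.preimage (Continuous.inner continuous_const continuous_id) isClosed_Icc

example (x y : E) : ⟪x, y⟫_ℝ ≤ ‖x‖ * ‖y‖ := real_inner_le_norm x y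

example (x : E) : ⟪x,x⟫_ℝ = 0 ↔ x = 0 := inner_self_eq_zero

example (n : ℤ) : ⌊(n:ℝ)⌋ = n := Int.floor_intCast n

example (D : Data E) (t : ℝ) (i : Fin D.r) :
    ∑ j, (if j = i then t else 0) • D.simple j = t • D.simple i := by
  rw [Finset.sum_eq_single i (fun b _ hb => by rw [if_neg hb, zero_smul])
      (fun h => absurd (Finset.mem_univ i) h), if_pos rfl]

example (D : Data E) (i : Fin D.r) (c : E) : aval (D.asimple i.succ) c = ⟪D.simple i, c⟫_ℝ := by
  simp [aval, Data.asimple]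

example (D : Data E) (c : E) : aval (D.asimple 0) c = 1 - ⟪D.hroot, c⟫_ℝ := by
  simp [aval, Data.asimple]; ring

end SSV

/-- for a `W0`-invariant function `k : Φ0 → Fˣ` and `J ⊊ {0,…,r}`, with
`η_J : Φ0+ → {−1,0,1}` recording whether `α` is `≡ 0`, `≡ 1`, or valued in `(0,1)` on
`C^J`: for `i ∈ J ∩ {1,…,r}`, `∏_{α ∈ Φ0+} k(α)^{η_J(α)·α(α_i∨)} = k(α_i)^{−2}`;
and if `0 ∈ J` then `∏_{α ∈ Φ0+} k(α)^{η_J(α)·α(φ∨)} = k(φ)²`. -/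
theorem statement16
    {E : Type*} [NormedAddCommGroup E] [InnerProductSpace ℝ E] [FiniteDimensional ℝ E]
    (D : SSV.Data E) {F : Type*} [Field F] (k : E → Fˣ)
    (hk : ∀ α ∈ D.Φ0, ∀ w ∈ D.W0, k (w.linear α) = k α)
    (J : Set (Fin (D.r + 1))) (hJ : J ≠ Set.univ)
    (ηJ : E → ℤ)
    (hη0 : ∀ α ∈ D.pos, (∀ c ∈ D.CJ J, ⟪α, c⟫_ℝ = 0) → ηJ α = -1)
    (hη1 : ∀ α ∈ D.pos, (∀ c ∈ D.CJ J, ⟪α, c⟫_ℝ = 1) → ηJ α = 1)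
    (hηm : ∀ α ∈ D.pos, (∀ c ∈ D.CJ J, 0 < ⟪α, c⟫_ℝ ∧ ⟪α, c⟫_ℝ < 1) → ηJ α = 0) :
    (∀ i : Fin D.r, i.succ ∈ J →
      ∏ α ∈ D.pos, k α ^ (ηJ α * ⌊⟪α, SSV.cv (D.simple i)⟫_ℝ⌋) =
        k (D.simple i) ^ (-2 : ℤ)) ∧
    ((0 : Fin (D.r + 1)) ∈ J →
      ∏ α ∈ D.pos, k α ^ (ηJ α * ⌊⟪α, SSV.cv D.hroot⟫_ℝ⌋) = k D.hroot ^ (2 : ℤ)) := by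
  classical
  have hΦ0 : ∀ α ∈ D.pos, α ∈ D.Φ0 := fun α h => D.pos_subset h
  have hsimΦ : ∀ i : Fin D.r, D.simple i ∈ D.Φ0 := fun i => hΦ0 _ (D.simple_mem_pos i)
  have hφΦ : D.hroot ∈ D.Φ0 := hΦ0 _ D.hroot_mem_pos
  have hnz : ∀ α ∈ D.Φ0, ⟪α, α⟫_ℝ ≠ 0 := by
    intro α hα
    simpa [inner_self_eq_zero] using D.root_ne_zero α hα
  rcases Set.eq_empty_or_nonempty (D.CJ J) with hCJe | ⟨c0, hc0⟩
  · exfalso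
    have h1 := hη0 (D.simple ⟨0, D.r_pos⟩) (D.simple_mem_pos _)
      (fun c hc => by rw [hCJe] at hc; exact (Set.notMem_empty c hc).elim)
    have h2 := hηm (D.simple ⟨0, D.r_pos⟩) (D.simple_mem_pos _)
      (fun c hc => by rw [hCJe] at hc; exact (Set.notMem_empty c hc).elim)
    omega
  have aval_succ : ∀ (i : Fin D.r) (c : E),
      SSV.aval (D.asimple i.succ) c = ⟪D.simple i, c⟫_ℝ := by
    intro i c; simp [SSV.aval, SSV.Data.asimple]
  have aval_zero : ∀ c : E, SSV.aval (D.asimple 0) c = 1 - ⟪D.hroot, c⟫_ℝ := by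
    intro c; simp [SSV.aval, SSV.Data.asimple]; ring
  have hCJ_simple : ∀ i : Fin D.r, i.succ ∈ J → ∀ c ∈ D.CJ J, ⟪D.simple i, c⟫_ℝ = 0 := by
    intro i hi c hc
    have h := (hc.2 i.succ).mpr hi
    rwa [aval_succ] at h
  have hCJ_hroot : (0 : Fin (D.r + 1)) ∈ J → ∀ c ∈ D.CJ J, ⟪D.hroot, c⟫_ℝ = 1 := by
    intro h0 c hc
    have h := (hc.2 0).mpr h0
    rw [aval_zero] at h; linarith
  have boundA : ∀ α ∈ D.pos, ∀ c ∈ D.Cbar, 0 ≤ ⟪α, c⟫_ℝ ∧ ⟪α, c⟫_ℝ ≤ 1 := by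
    intro α hα c hc
    have hsub : D.Cp ⊆ {y : E | ⟪α, y⟫_ℝ ∈ Set.Icc (0:ℝ) 1} := by
      intro y hy
      obtain ⟨h1, h2⟩ := hy α hα
      exact ⟨le_of_lt h1, le_of_lt h2⟩
    have hcl : IsClosed {y : E | ⟪α, y⟫_ℝ ∈ Set.Icc (0:ℝ) 1} :=
      IsClosed.preimage (Continuous.inner continuous_const continuous_id) isClosed_Icc
    exact closure_minimal hsub hcl hc
  have B0 : ∀ α ∈ D.pos, ∀ c ∈ D.CJ J, ⟪α, c⟫_ℝ = 0 → ∀ c' ∈ D.CJ J, ⟪α, c'⟫_ℝ = 0 := by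
    intro α hα c hc h0 c' hc'
    obtain ⟨n, hn⟩ := D.pos_nat_comb α hα
    have hterm : ∀ d : E, ⟪α, d⟫_ℝ = ∑ j, (n j : ℝ) * ⟪D.simple j, d⟫_ℝ := by
      intro d
      rw [hn, sum_inner]
      exact Finset.sum_congr rfl fun j _ => real_inner_smul_left _ _ _
    have hnn : ∀ j ∈ Finset.univ (α := Fin D.r), 0 ≤ (n j : ℝ) * ⟪D.simple j, c⟫_ℝ :=
      fun j _ => mul_nonneg (Nat.cast_nonneg _) (boundA _ (D.simple_mem_pos j) c hc.1).1
    have hz := (Finset.sum_eq_zero_iff_of_nonneg hnn).mp (by rw [← hterm c]; exact h0)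
    rw [hterm c']
    refine Finset.sum_eq_zero fun j _ => ?_
    rcases mul_eq_zero.mp (hz j (Finset.mem_univ j)) with h | h
    · rw [h, zero_mul]
    · have hmem : j.succ ∈ J := (hc.2 j.succ).mp (by rw [aval_succ]; exact h)
      rw [hCJ_simple j hmem c' hc', mul_zero]
  have B1 : ∀ α ∈ D.pos, ∀ c ∈ D.CJ J, ⟪α, c⟫_ℝ = 1 → ∀ c' ∈ D.CJ J, ⟪α, c'⟫_ℝ = 1 := by
    intro α hα c hc h1 c' hc'
    obtain ⟨n, hn⟩ := D.hroot_highest α (hΦ0 α hα)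
    have hterm : ∀ d : E,
        ⟪D.hroot, d⟫_ℝ - ⟪α, d⟫_ℝ = ∑ j, (n j : ℝ) * ⟪D.simple j, d⟫_ℝ := by
      intro d
      rw [← inner_sub_left, hn, sum_inner]
      exact Finset.sum_congr rfl fun j _ => real_inner_smul_left _ _ _
    have hnn : ∀ j ∈ Finset.univ (α := Fin D.r), 0 ≤ (n j : ℝ) * ⟪D.simple j, c⟫_ℝ :=
      fun j _ => mul_nonneg (Nat.cast_nonneg _) (boundA _ (D.simple_mem_pos j) c hc.1).1
    have hφc := (boundA _ D.hroot_mem_pos c hc.1).2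
    have hSnn : 0 ≤ ∑ j, (n j : ℝ) * ⟪D.simple j, c⟫_ℝ := Finset.sum_nonneg hnn
    have hφ1 : ⟪D.hroot, c⟫_ℝ = 1 := by
      have h := hterm c
      rw [h1] at h
      linarith
    have hS0 : ∑ j, (n j : ℝ) * ⟪D.simple j, c⟫_ℝ = 0 := by
      have h := hterm c
      rw [h1, hφ1] at h
      linarith
    have hz := (Finset.sum_eq_zero_iff_of_nonneg hnn).mp hS0
    have h0J : (0 : Fin (D.r + 1)) ∈ J := (hc.2 0).mp (by rw [aval_zero, hφ1]; ring)
    have hS0' : ∑ j, (n j : ℝ) * ⟪D.simple j, c'⟫_ℝ = 0 := by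
      refine Finset.sum_eq_zero fun j _ => ?_
      rcases mul_eq_zero.mp (hz j (Finset.mem_univ j)) with h | h
      · rw [h, zero_mul]
      · have hmem : j.succ ∈ J := (hc.2 j.succ).mp (by rw [aval_succ]; exact h)
        rw [hCJ_simple j hmem c' hc', mul_zero]
    have h := hterm c'
    rw [hS0'] at h
    have h2 := hCJ_hroot h0J c' hc'
    linarith
  have tri : ∀ α ∈ D.pos,
      (∀ c ∈ D.CJ J, ⟪α, c⟫_ℝ = 0) ∨ (∀ c ∈ D.CJ J, ⟪α, c⟫_ℝ = 1) ∨
        (∀ c ∈ D.CJ J, 0 < ⟪α, c⟫_ℝ ∧ ⟪α, c⟫_ℝ < 1) := by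
    intro α hα
    by_cases h0 : ⟪α, c0⟫_ℝ = 0
    · exact Or.inl (B0 α hα c0 hc0 h0)
    by_cases h1 : ⟪α, c0⟫_ℝ = 1
    · exact Or.inr (Or.inl (B1 α hα c0 hc0 h1))
    refine Or.inr (Or.inr fun c hc => ?_)
    obtain ⟨hl, hr⟩ := boundA α hα c hc.1
    constructor
    · rcases lt_or_eq_of_le hl with h | h
      · exact h
      · exact (h0 (B0 α hα c hc h.symm c0 hc0)).elim
    · rcases lt_or_eq_of_le hr with h | h
      · exact h
      · exact (h1 (B1 α hα c hc h c0 hc0)).elim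
  have etaEq : ∀ α ∈ D.pos, ∀ β ∈ D.pos,
      (∀ c ∈ D.CJ J, ⟪β, c⟫_ℝ = ⟪α, c⟫_ℝ) → ηJ β = ηJ α := by
    intro α hα β hβ heq
    rcases tri α hα with h | h | h
    · rw [hη0 β hβ fun c hc => (heq c hc).trans (h c hc), hη0 α hα h]
    · rw [hη1 β hβ fun c hc => (heq c hc).trans (h c hc), hη1 α hα h]
    · rw [hηm β hβ fun c hc => by rw [heq c hc]; exact h c hc, hηm α hα h]
  have etaFlip : ∀ α ∈ D.pos, ∀ β ∈ D.pos,
      (∀ c ∈ D.CJ J, ⟪β, c⟫_ℝ = 1 - ⟪α, c⟫_ℝ) → ηJ β = -ηJ α := by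
    intro α hα β hβ heq
    rcases tri α hα with h | h | h
    · rw [hη1 β hβ fun c hc => by rw [heq c hc, h c hc]; ring, hη0 α hα h]
      decide
    · rw [hη0 β hβ fun c hc => by rw [heq c hc, h c hc]; ring, hη1 α hα h]
    · rw [hηm β hβ fun c hc => by
          obtain ⟨ha, hb⟩ := h c hc
          rw [heq c hc]
          constructor <;> linarith,
        hηm α hα h]
      decide
  have lrefl_self : ∀ γ ∈ D.Φ0, SSV.lrefl γ γ = -γ := by
    intro γ hγ
    rw [SSV.lrefl_apply' (hnz γ hγ), div_mul_cancel₀ _ (hnz γ hγ), two_smul, ← sub_sub,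
      sub_self, zero_sub]
  have kinv : ∀ γ ∈ D.Φ0, ∀ β ∈ D.Φ0, k (SSV.lrefl γ β) = k β := by
    intro γ hγ β hβ
    have hw : SSV.aRefl γ 0 ∈ D.W0 := Subgroup.subset_closure ⟨γ, hγ, rfl⟩
    have h := hk β hβ (SSV.aRefl γ 0) hw
    rwa [SSV.aRefl_linear_apply] at h
  have kneg : ∀ β ∈ D.Φ0, k (-β) = k β := by
    intro β hβ
    have h := kinv β hβ β hβ
    rwa [lrefl_self β hβ] at h
  have hcv2 : ∀ γ ∈ D.Φ0, ⟪γ, SSV.cv γ⟫_ℝ = 2 := by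
    intro γ hγ
    rw [SSV.cv, real_inner_smul_right, div_mul_cancel₀ _ (hnz γ hγ)]
  have hreflcv : ∀ γ ∈ D.Φ0, ∀ β : E,
      ⟪SSV.lrefl γ β, SSV.cv γ⟫_ℝ = -⟪β, SSV.cv γ⟫_ℝ := by
    intro γ hγ β
    rw [SSV.lrefl_apply' (hnz γ hγ), inner_sub_left, real_inner_smul_left, hcv2 γ hγ,
      SSV.cv, real_inner_smul_right, real_inner_comm γ β]
    ring
  have hreflc : ∀ γ ∈ D.Φ0, ∀ β c : E, ⟪γ, c⟫_ℝ = 0 →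
      ⟪SSV.lrefl γ β, c⟫_ℝ = ⟪β, c⟫_ℝ := by
    intro γ hγ β c h
    rw [SSV.lrefl_apply' (hnz γ hγ), inner_sub_left, real_inner_smul_left, h, mul_zero,
      sub_zero]
  have hint : ∀ α ∈ D.Φ0, ∀ γ ∈ D.Φ0, ∃ n : ℤ, ⟪α, SSV.cv γ⟫_ℝ = (n : ℝ) := by
    intro α hα γ hγ
    obtain ⟨n, hn⟩ := D.root_crystal α hα γ hγ
    exact ⟨n, by rw [real_inner_comm]; exact hn⟩
  have hsum_ite : ∀ (t : ℝ) (i : Fin D.r),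
      ∑ j, (if j = i then t else 0) • D.simple j = t • D.simple i := by
    intro t i
    rw [Finset.sum_eq_single i (fun b _ hb => by rw [if_neg hb, zero_smul])
        (fun h => absurd (Finset.mem_univ i) h), if_pos rfl]
  have hperm : ∀ i : Fin D.r, ∀ α ∈ D.pos, α ≠ D.simple i →
      SSV.lrefl (D.simple i) α ∈ D.pos := by
    intro i α hα hne
    have hγΦ := hsimΦ i
    have hγnz := hnz _ hγΦ
    have hβΦ : SSV.lrefl (D.simple i) α ∈ D.Φ0 := by
      have h := D.root_refl_mem (D.simple i) hγΦ α (hΦ0 α hα)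
      rwa [SSV.aRefl_zero_apply] at h
    rcases D.pos_dichotomy _ hβΦ with h | h
    · exact h.1
    exfalso
    obtain ⟨n, hn⟩ := D.pos_nat_comb α hα
    obtain ⟨n', hn'⟩ := D.pos_nat_comb _ h.2
    set t := 2 / ⟪D.simple i, D.simple i⟫_ℝ * ⟪D.simple i, α⟫_ℝ with ht
    have hβ : -(SSV.lrefl (D.simple i) α) = t • D.simple i - α := by
      rw [SSV.lrefl_apply' hγnz, neg_sub, ht]
    have hz : ∀ l, ((n l : ℝ) + (n' l : ℝ)) - (if l = i then t else 0) = 0 := by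
      refine Fintype.linearIndependent_iff.mp D.simple_indep _ ?_
      simp only [sub_smul, add_smul]
      rw [Finset.sum_sub_distrib, Finset.sum_add_distrib, ← hn, ← hn', hsum_ite t i, hβ]
      abel
    have hnj : ∀ l, l ≠ i → n l = 0 := by
      intro l hl
      have h1 := hz l
      rw [if_neg hl, sub_zero] at h1
      have h2 : (0:ℝ) ≤ (n l : ℝ) := Nat.cast_nonneg _
      have h3 : (0:ℝ) ≤ (n' l : ℝ) := Nat.cast_nonneg _
      have h4 : (n l : ℝ) = 0 := by linarith
      exact_mod_cast h4
    have hαeq : α = (n i : ℝ) • D.simple i := by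
      rw [hn, Finset.sum_eq_single i (fun b _ hb => by rw [hnj b hb]; simp)
          (fun h => absurd (Finset.mem_univ i) h)]
    rcases Nat.eq_zero_or_pos (n i) with h0 | hposn
    · apply D.root_ne_zero α (hΦ0 α hα)
      rw [hαeq, h0]; simp
    · rcases D.root_reduced (D.simple i) hγΦ ((n i : ℝ))
        (by rw [← hαeq]; exact hΦ0 α hα) with h1 | h1
      · apply hne
        rw [hαeq, h1, one_smul]
      · have h2 : (0:ℝ) ≤ (n i : ℝ) := Nat.cast_nonneg _
        rw [h1] at h2
        linarith
  constructor
  · intro i hi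
    have hγΦ := hsimΦ i
    have hγnz := hnz _ hγΦ
    have hγpos := D.simple_mem_pos i
    rw [← Finset.mul_prod_erase _ _ hγpos]
    have hErase : ∏ α ∈ D.pos.erase (D.simple i),
        k α ^ (ηJ α * ⌊⟪α, SSV.cv (D.simple i)⟫_ℝ⌋) = 1 := by
      refine Finset.prod_involution (fun α _ => SSV.lrefl (D.simple i) α) ?_ ?_ ?_ ?_
      · intro α hα
        obtain ⟨hαne, hαpos⟩ := Finset.mem_erase.mp hα
        obtain ⟨nα, hnα⟩ := hint α (hΦ0 α hαpos) _ hγΦ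
        have h1 : ⌊⟪α, SSV.cv (D.simple i)⟫_ℝ⌋ = nα := by rw [hnα, Int.floor_intCast]
        have h2 : ⌊⟪SSV.lrefl (D.simple i) α, SSV.cv (D.simple i)⟫_ℝ⌋ = -nα := by
          rw [hreflcv _ hγΦ α, hnα, ← Int.cast_neg, Int.floor_intCast]
        rw [kinv _ hγΦ α (hΦ0 α hαpos),
          etaEq α hαpos _ (hperm i α hαpos hαne)
            (fun c hc => hreflc _ hγΦ α c (hCJ_simple i hi c hc)),
          h1, h2, ← zpow_add]
        have h3 : ηJ α * nα + ηJ α * -nα = 0 := by ring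
        rw [h3, zpow_zero]
      · intro α hα hfα
        intro heq
        have heq' : SSV.lrefl (D.simple i) α = α := heq
        have h := hreflcv _ hγΦ α
        rw [heq'] at h
        have h0 : ⟪α, SSV.cv (D.simple i)⟫_ℝ = 0 := by linarith
        exact hfα (by rw [h0, Int.floor_zero, mul_zero, zpow_zero])
      · intro α hα
        obtain ⟨hαne, hαpos⟩ := Finset.mem_erase.mp hα
        refine Finset.mem_erase.mpr ⟨fun heq => ?_, hperm i α hαpos hαne⟩
        have h := congrArg (SSV.lrefl (D.simple i)) heq
        rw [SSV.lrefl_invol hγnz, lrefl_self _ hγΦ] at h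
        rcases D.pos_dichotomy _ hγΦ with hd | hd
        · exact hd.2 (h ▸ hαpos)
        · exact hd.1 hγpos
      · intro α hα
        exact SSV.lrefl_invol hγnz α
    rw [hErase, mul_one, hη0 (D.simple i) hγpos (fun c hc => hCJ_simple i hi c hc),
      hcv2 _ hγΦ, show ((2:ℝ)) = ((2:ℤ):ℝ) by norm_num, Int.floor_intCast]
    norm_num
  · intro h0J
    have hφnz := hnz _ hφΦ
    have hφpos := D.hroot_mem_pos
    have hdom_s : ∀ j : Fin D.r, 0 ≤ ⟪D.simple j, D.hroot⟫_ℝ := by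
      intro j
      have hγΦ := hsimΦ j
      have hγnz := hnz _ hγΦ
      have hsφ : SSV.lrefl (D.simple j) D.hroot ∈ D.Φ0 := by
        have h := D.root_refl_mem (D.simple j) hγΦ D.hroot hφΦ
        rwa [SSV.aRefl_zero_apply] at h
      obtain ⟨n, hn⟩ := D.hroot_highest _ hsφ
      set t := 2 / ⟪D.simple j, D.simple j⟫_ℝ * ⟪D.simple j, D.hroot⟫_ℝ with ht
      have h1 : t • D.simple j = ∑ l, (n l : ℝ) • D.simple l := by
        rw [← hn, SSV.lrefl_apply' hγnz, sub_sub_cancel, ht]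
      have hz : ∀ l, (if l = j then t else 0) - (n l : ℝ) = 0 := by
        refine Fintype.linearIndependent_iff.mp D.simple_indep _ ?_
        simp only [sub_smul]
        rw [Finset.sum_sub_distrib, hsum_ite t j, h1, sub_self]
      have h2 := hz j
      rw [if_pos rfl] at h2
      have h3 : (0:ℝ) ≤ (n j : ℝ) := Nat.cast_nonneg _
      have htnn : 0 ≤ t := by linarith
      have hγpos' : 0 < ⟪D.simple j, D.simple j⟫_ℝ :=
        lt_of_le_of_ne real_inner_self_nonneg (Ne.symm hγnz)
      by_contra hneg
      push_neg at hneg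
      have h4 : t < 0 := mul_neg_of_pos_of_neg (by positivity) hneg
      linarith
    have hdom : ∀ α ∈ D.pos, 0 ≤ ⟪α, D.hroot⟫_ℝ := by
      intro α hα
      obtain ⟨n, hn⟩ := D.pos_nat_comb α hα
      rw [hn, sum_inner]
      exact Finset.sum_nonneg fun j _ => by
        rw [real_inner_smul_left]
        exact mul_nonneg (Nat.cast_nonneg _) (hdom_s j)
    have hub : ∀ α ∈ D.Φ0, ⟪α, D.hroot⟫_ℝ ≤ ⟪D.hroot, D.hroot⟫_ℝ := by
      intro α hα
      have hle : ‖α‖ ≤ ‖D.hroot‖ := by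
        have h1 := D.root_norm_le α hα
        rw [← D.hroot_long, real_inner_self_eq_norm_mul_norm,
          real_inner_self_eq_norm_mul_norm] at h1
        nlinarith [norm_nonneg α, norm_nonneg D.hroot]
      calc ⟪α, D.hroot⟫_ℝ ≤ ‖α‖ * ‖D.hroot‖ := real_inner_le_norm α D.hroot
        _ ≤ ‖D.hroot‖ * ‖D.hroot‖ := by nlinarith [norm_nonneg D.hroot]
        _ = ⟪D.hroot, D.hroot⟫_ℝ := (real_inner_self_eq_norm_mul_norm D.hroot).symm
    have heq2 : ∀ α ∈ D.Φ0, ⟪α, D.hroot⟫_ℝ = ⟪D.hroot, D.hroot⟫_ℝ → α = D.hroot := by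
      intro α hα he
      have hexp : ⟪α - D.hroot, α - D.hroot⟫_ℝ
          = ⟪α, α⟫_ℝ - 2 * ⟪α, D.hroot⟫_ℝ + ⟪D.hroot, D.hroot⟫_ℝ := by
        rw [inner_sub_left, inner_sub_right, inner_sub_right, real_inner_comm D.hroot α]
        ring
      have h1 : ⟪α, α⟫_ℝ ≤ ⟪D.hroot, D.hroot⟫_ℝ := by
        rw [D.hroot_long]; exact D.root_norm_le α hα
      have h2 : ⟪α - D.hroot, α - D.hroot⟫_ℝ ≤ 0 := by rw [hexp, he]; linarith
      have h3 : α - D.hroot = 0 := by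
        rw [← inner_self_eq_zero (𝕜 := ℝ)]
        exact le_antisymm h2 real_inner_self_nonneg
      exact sub_eq_zero.mp h3
    have hcvφ : ∀ β : E,
        ⟪β, SSV.cv D.hroot⟫_ℝ = 2 / ⟪D.hroot, D.hroot⟫_ℝ * ⟪β, D.hroot⟫_ℝ := by
      intro β; rw [SSV.cv, real_inner_smul_right]
    have hspos : 0 < ⟪D.hroot, D.hroot⟫_ℝ :=
      lt_of_le_of_ne real_inner_self_nonneg (Ne.symm hφnz)
    have hclass : ∀ α ∈ D.pos.erase D.hroot,
        ⟪α, SSV.cv D.hroot⟫_ℝ = 0 ∨ ⟪α, SSV.cv D.hroot⟫_ℝ = 1 := by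
      intro α hα
      obtain ⟨hαne, hαpos⟩ := Finset.mem_erase.mp hα
      obtain ⟨nα, hnα⟩ := hint α (hΦ0 α hαpos) _ hφΦ
      have hge : (0:ℝ) ≤ (nα : ℝ) := by
        rw [← hnα, hcvφ]
        exact mul_nonneg (by positivity) (hdom α hαpos)
      have hle : (nα:ℝ) ≤ 2 := by
        rw [← hnα, hcvφ, div_mul_eq_mul_div, div_le_iff₀ hspos]
        have := hub α (hΦ0 α hαpos)
        linarith
      have hne2 : (nα:ℝ) ≠ 2 := by
        intro h2
        apply hαne
        apply heq2 α (hΦ0 α hαpos)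
        have hx := hnα
        rw [hcvφ, h2] at hx
        field_simp at hx
        linarith
      have h01 : nα = 0 ∨ nα = 1 := by
        have hgeZ : (0:ℤ) ≤ nα := by exact_mod_cast hge
        have hleZ : nα ≤ 2 := by exact_mod_cast hle
        have hneZ : nα ≠ 2 := fun h => hne2 (by exact_mod_cast h)
        omega
      rcases h01 with h | h
      · left; rw [hnα, h]; norm_num
      · right; rw [hnα, h]; norm_num
    have hbranch : ∀ α ∈ D.pos.erase D.hroot, ⟪α, SSV.cv D.hroot⟫_ℝ = 1 →
        D.hroot - α ∈ D.pos.erase D.hroot ∧ ⟪D.hroot - α, SSV.cv D.hroot⟫_ℝ = 1 ∧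
          k (D.hroot - α) = k α := by
      intro α hα h1
      obtain ⟨hαne, hαpos⟩ := Finset.mem_erase.mp hα
      have hαΦ := hΦ0 α hαpos
      have hlφ : SSV.lrefl D.hroot α = α - D.hroot := by
        rw [SSV.lrefl_apply' hφnz]
        congr 1
        rw [real_inner_comm α D.hroot, ← hcvφ α, h1, one_smul]
      have hsφΦ : α - D.hroot ∈ D.Φ0 := by
        have h := D.root_refl_mem D.hroot hφΦ α hαΦ
        rwa [SSV.aRefl_zero_apply, hlφ] at h
      have hβΦ : D.hroot - α ∈ D.Φ0 := by
        have h := D.root_neg_mem _ hsφΦ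
        rwa [neg_sub] at h
      have hβcv : ⟪D.hroot - α, SSV.cv D.hroot⟫_ℝ = 1 := by
        rw [inner_sub_left, h1, hcvφ, div_mul_cancel₀ _ hφnz]
        norm_num
      have hαφ2 : ⟪α, D.hroot⟫_ℝ = ⟪D.hroot, D.hroot⟫_ℝ / 2 := by
        have hx := h1
        rw [hcvφ] at hx
        field_simp at hx
        linarith
      have hβpos : D.hroot - α ∈ D.pos := by
        rcases D.pos_dichotomy _ hβΦ with h | h
        · exact h.1
        · exfalso
          have hd := hdom _ h.2
          rw [neg_sub, inner_sub_left, hαφ2] at hd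
          linarith
      have hβne : D.hroot - α ≠ D.hroot := fun h =>
        D.root_ne_zero α hαΦ (sub_eq_self.mp h)
      have hkβ : k (D.hroot - α) = k α := by
        have h1' : k (-(α - D.hroot)) = k (α - D.hroot) := kneg _ hsφΦ
        rw [neg_sub] at h1'
        rw [h1', ← hlφ, kinv _ hφΦ α hαΦ]
      exact ⟨Finset.mem_erase.mpr ⟨hβne, hβpos⟩, hβcv, hkβ⟩
    rw [← Finset.mul_prod_erase _ _ hφpos]
    have hErase : ∏ α ∈ D.pos.erase D.hroot,
        k α ^ (ηJ α * ⌊⟪α, SSV.cv D.hroot⟫_ℝ⌋) = 1 := by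
      refine Finset.prod_involution
        (fun α _ => if ⟪α, SSV.cv D.hroot⟫_ℝ = 0 then α else D.hroot - α) ?_ ?_ ?_ ?_
      · intro α hα
        beta_reduce
        rcases hclass α hα with h | h
        · rw [if_pos h, h, Int.floor_zero, mul_zero, zpow_zero, one_mul]
        · obtain ⟨hβmem, hβcv, hkβ⟩ := hbranch α hα h
          rw [if_neg (by rw [h]; norm_num)]
          obtain ⟨hαne, hαpos⟩ := Finset.mem_erase.mp hα
          obtain ⟨hβne, hβpos⟩ := Finset.mem_erase.mp hβmem
          have hηβ : ηJ (D.hroot - α) = -ηJ α :=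
            etaFlip α hαpos _ hβpos fun c hc => by
              rw [inner_sub_left, hCJ_hroot h0J c hc]
          rw [hkβ, hηβ, h, hβcv, Int.floor_one, ← zpow_add]
          have h3 : ηJ α * 1 + -ηJ α * 1 = 0 := by ring
          rw [h3, zpow_zero]
      · intro α hα hfα
        beta_reduce
        rcases hclass α hα with h | h
        · exact absurd (by rw [h, Int.floor_zero, mul_zero, zpow_zero]) hfα
        · rw [if_neg (by rw [h]; norm_num)]
          intro heq
          obtain ⟨hαne, hαpos⟩ := Finset.mem_erase.mp hα
          rcases D.root_reduced α (hΦ0 α hαpos) 2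
            (by rw [two_smul, ← eq_add_of_sub_eq heq]; exact hφΦ) with h2 | h2 <;>
            norm_num at h2
      · intro α hα
        beta_reduce
        rcases hclass α hα with h | h
        · rw [if_pos h]; exact hα
        · rw [if_neg (by rw [h]; norm_num)]
          exact (hbranch α hα h).1
      · intro α hα
        beta_reduce
        rcases hclass α hα with h | h
        · rw [if_pos h, if_pos h]
        · have hβcv := (hbranch α hα h).2.1
          have hif : (if ⟪α, SSV.cv D.hroot⟫_ℝ = 0 then α else D.hroot - α) = D.hroot - α :=
            if_neg (by rw [h]; norm_num)
          have hif2 : (if ⟪D.hroot - α, SSV.cv D.hroot⟫_ℝ = 0 then D.hroot - α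
              else D.hroot - (D.hroot - α)) = D.hroot - (D.hroot - α) :=
            if_neg (by rw [hβcv]; norm_num)
          rw [hif, hif2, sub_sub_cancel]
    rw [hErase, mul_one, hη1 D.hroot hφpos (fun c hc => hCJ_hroot h0J c hc),
      hcv2 _ hφΦ, show ((2:ℝ)) = ((2:ℤ):ℝ) by norm_num, Int.floor_intCast]
    norm_num
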